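/- Let f(x) be a monic irreducible polynomial of degree d over F_{p^m}, K = F_{p^m}[x]/⟨f(x)^{p^s}⟩, and 1 ≤ k ≤ p^s − 1. For b(x) ∈ f(x)^{⌈(p^s−k)/2⌉−1}(K/⟨f(x)^{p^s−k−1}⟩), the ideal C = ⟨f(x)^{k+1} b(x) + u f(x)^k⟩ of K + uK (u² = 0) has exactly p^{md(p^s−k)} elements. -/

import Mathlib

open Polynomial

set_option synthInstance.maxHeartbeats 1000000

/-- The finite chain ring `K = F[x]/⟨f^{p^s}⟩`. -/
abbrev Kq (F : Type) [Field F] (g : F[X]) : Type := F[X] ⧸ Ideal.span {g}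

noncomputable instance (F : Type) [Field F] (g : F[X]) : CommRing (Kq F g) :=
  Ideal.Quotient.commRing _

/-- The ring `K + uK = K[u]/⟨u²⟩`. -/
abbrev Kqu (F : Type) [Field F] (g : F[X]) : Type :=
  Polynomial (Kq F g) ⧸ Ideal.span {(X : Polynomial (Kq F g)) ^ 2}



lemma card_Kq (F : Type) [Field F] [Fintype F] (g : F[X]) (hg : g ≠ 0) :
    Nat.card (Kq F g) = Fintype.card F ^ g.natDegree := by
  show Nat.card (AdjoinRoot g) = _
  rw [Nat.card_congr (AdjoinRoot.powerBasis hg).basis.equivFun.toEquiv, Nat.card_fun]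
  simp [Nat.card_eq_fintype_card, AdjoinRoot.powerBasis_dim]

lemma dvd_aux (F : Type) [Field F] (f : F[X]) (hf : f ≠ 0) (P j : ℕ) (hj : j ≤ P)
    (g : F[X]) : f ^ P ∣ f ^ j * g ↔ f ^ (P - j) ∣ g := by
  constructor
  · rintro ⟨t, ht⟩
    refine ⟨t, ?_⟩
    have h1 : f ^ j * g = f ^ j * (f ^ (P - j) * t) := by
      rw [ht, ← mul_assoc, ← pow_add]
      congr 2
      omega
    exact mul_left_cancel₀ (pow_ne_zero _ hf) h1
  · rintro ⟨t, rfl⟩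
    exact ⟨t, by rw [← mul_assoc, ← pow_add]; congr 2; omega⟩

lemma card_span_pow (F : Type) [Field F] [Fintype F] (f : F[X]) (hf : f ≠ 0)
    (P j : ℕ) (hj : j ≤ P) :
    Nat.card ↥(Ideal.span {(Ideal.Quotient.mk (Ideal.span {f ^ P}) f) ^ j}
      : Ideal (Kq F (f ^ P))) = Fintype.card F ^ (f.natDegree * (P - j)) := by
  set Q : Ideal F[X] := Ideal.span {f ^ P} with hQ
  set mkq : F[X] →ₐ[F] Kq F (f ^ P) := Ideal.Quotient.mkₐ F Q with hmkq
  set ψ : F[X] →ₗ[F] Kq F (f ^ P) :=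
    mkq.toLinearMap ∘ₗ LinearMap.mulLeft F (f ^ j) with hψ
  have hψ_apply : ∀ g : F[X], ψ g = Ideal.Quotient.mk Q (f ^ j * g) := fun g => rfl
  have hker : LinearMap.ker ψ = (Ideal.span {f ^ (P - j)}).restrictScalars F := by
    ext g
    rw [LinearMap.mem_ker, hψ_apply, Ideal.Quotient.eq_zero_iff_mem, hQ,
      Ideal.mem_span_singleton, Submodule.restrictScalars_mem, Ideal.mem_span_singleton]
    exact dvd_aux F f hf P j hj g
  have hrange : (LinearMap.range ψ : Set (Kq F (f ^ P))) =
      (Ideal.span {(Ideal.Quotient.mk Q f) ^ j} : Ideal (Kq F (f ^ P))) := by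
    ext z
    simp only [SetLike.mem_coe, LinearMap.mem_range, Ideal.mem_span_singleton']
    constructor
    · rintro ⟨g, rfl⟩
      exact ⟨Ideal.Quotient.mk Q g, by rw [hψ_apply, map_mul, map_pow, mul_comm]⟩
    · rintro ⟨r, hr⟩
      obtain ⟨g, rfl⟩ := Ideal.Quotient.mk_surjective r
      exact ⟨g, by rw [hψ_apply, map_mul, map_pow, mul_comm]; exact hr⟩
  calc Nat.card ↥(Ideal.span {(Ideal.Quotient.mk Q f) ^ j} : Ideal (Kq F (f ^ P)))
      = Nat.card (LinearMap.range ψ) := by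
        exact Nat.card_congr (Equiv.setCongr hrange.symm)
    _ = Nat.card (F[X] ⧸ LinearMap.ker ψ) :=
        (Nat.card_congr (LinearMap.quotKerEquivRange ψ).toEquiv).symm
    _ = Nat.card (F[X] ⧸ Ideal.span {f ^ (P - j)}) := by
        rw [hker]
        exact Nat.card_congr
          (Submodule.Quotient.restrictScalarsEquiv F (Ideal.span {f ^ (P - j)})).toEquiv
    _ = Fintype.card F ^ (f.natDegree * (P - j)) := by
        have := card_Kq F (f ^ (P - j)) (pow_ne_zero _ hf)
        rw [natDegree_pow] at this
        rw [show (F[X] ⧸ Ideal.span {f ^ (P - j)}) = Kq F (f ^ (P - j)) from rfl, this,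
          Nat.mul_comm]

lemma ann_eq (F : Type) [Field F] (f : F[X]) (hf : f ≠ 0) (P k : ℕ) (hk : k ≤ P) :
    {x : Kq F (f ^ P) | x * (Ideal.Quotient.mk (Ideal.span {f ^ P}) f) ^ k = 0} =
      ↑(Ideal.span {(Ideal.Quotient.mk (Ideal.span {f ^ P}) f) ^ (P - k)}
        : Ideal (Kq F (f ^ P))) := by
  set Q : Ideal F[X] := Ideal.span {f ^ P} with hQ
  ext x
  obtain ⟨g, rfl⟩ := Ideal.Quotient.mk_surjective x
  have h1 : (Ideal.Quotient.mk Q g * (Ideal.Quotient.mk Q f) ^ k = 0) ↔ f ^ (P - k) ∣ g := by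
    rw [← map_pow, ← map_mul, Ideal.Quotient.eq_zero_iff_mem, hQ, Ideal.mem_span_singleton,
      mul_comm]
    exact dvd_aux F f hf P k hk g
  have h2 : (Ideal.Quotient.mk Q g ∈
      (Ideal.span {(Ideal.Quotient.mk Q f) ^ (P - k)} : Ideal (Kq F (f ^ P)))) ↔
      f ^ (P - k) ∣ g := by
    rw [Ideal.mem_span_singleton']
    constructor
    · rintro ⟨r, hr⟩
      obtain ⟨h, rfl⟩ := Ideal.Quotient.mk_surjective r
      rw [← map_pow, ← map_mul] at hr
      have h3 : Ideal.Quotient.mk Q (h * f ^ (P - k) - g) = 0 := by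
        rw [map_sub, hr, sub_self]
      rw [Ideal.Quotient.eq_zero_iff_mem, hQ, Ideal.mem_span_singleton] at h3
      have h4 : f ^ (P - k) ∣ h * f ^ (P - k) - g :=
        dvd_trans (pow_dvd_pow f (by omega)) h3
      have h5 : f ^ (P - k) ∣ h * f ^ (P - k) := Dvd.intro h (mul_comm _ _)
      exact (dvd_sub_right h5).mp h4
    · rintro ⟨t, rfl⟩
      exact ⟨Ideal.Quotient.mk Q t, by rw [← map_pow, ← map_mul, mul_comm]⟩
  simp only [Set.mem_setOf_eq, SetLike.mem_coe]
  exact h1.trans h2.symm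

section main
variable (F : Type) [Field F] (h : F[X])

lemma nontrivial_Kq (hdeg : 0 < h.natDegree) : Nontrivial (Kq F h) :=
  Ideal.Quotient.nontrivial_iff.mpr (by
    rw [Ne, Ideal.span_singleton_eq_top]
    exact fun hu => (Polynomial.not_isUnit_of_natDegree_pos h hdeg) hu)

-- representation of Kqu elements
lemma rep_Kqu (hdeg : 0 < h.natDegree) (r : Kqu F h) :
    ∃ a b : Kq F h, r = Ideal.Quotient.mk _ (C a + X * C b) := by
  obtain ⟨q, rfl⟩ := Ideal.Quotient.mk_surjective r
  have hmq : (X ^ 2 : (Kq F h)[X]).Monic := monic_X_pow 2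
  refine ⟨(q %ₘ X ^ 2).coeff 0, (q %ₘ X ^ 2).coeff 1, ?_⟩
  conv_lhs => rw [← modByMonic_add_div q (X ^ 2)]
  rw [map_add]
  have h2 : Ideal.Quotient.mk (Ideal.span {(X : (Kq F h)[X]) ^ 2}) (X ^ 2 * (q /ₘ X ^ 2)) = 0 := by
    rw [Ideal.Quotient.eq_zero_iff_mem]
    exact Ideal.mul_mem_right _ _ (Ideal.subset_span rfl)
  rw [h2, add_zero]
  haveI := nontrivial_Kq F h hdeg
  have hlt : (q %ₘ X ^ 2).degree < 2 := by
    have := degree_modByMonic_lt q hmq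
    rwa [degree_X_pow] at this
  have hle : (q %ₘ X ^ 2).degree ≤ 1 := by
    rcases hn : (q %ₘ X ^ 2).degree with _ | n
    · exact bot_le
    · rw [hn] at hlt
      rw [WithBot.some_eq_coe] at hn hlt ⊢
      rw [show (2 : WithBot ℕ) = ((2 : ℕ) : WithBot ℕ) from rfl] at hlt
      have h4 : n ≤ 1 := by
        have := WithBot.coe_lt_coe.mp hlt
        omega
      calc ((n : ℕ) : WithBot ℕ) ≤ ((1 : ℕ) : WithBot ℕ) := WithBot.coe_le_coe.mpr h4
        _ = 1 := rfl
  have heq : q %ₘ X ^ 2 = C ((q %ₘ X ^ 2).coeff 0) + X * C ((q %ₘ X ^ 2).coeff 1) := by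
    conv_lhs => rw [eq_X_add_C_of_degree_le_one hle]
    ring
  rw [← heq]

-- injectivity
lemma inj_Kqu (a b : Kq F h)
    (hz : Ideal.Quotient.mk (Ideal.span {(X : (Kq F h)[X]) ^ 2}) (C a + X * C b) = 0) :
    a = 0 ∧ b = 0 := by
  rw [Ideal.Quotient.eq_zero_iff_mem, Ideal.mem_span_singleton] at hz
  obtain ⟨t, ht⟩ := hz
  rw [mul_comm (X ^ 2 : (Kq F h)[X]) t] at ht
  constructor
  · have := congrArg (fun q => Polynomial.coeff q 0) ht
    simpa [coeff_mul_X_pow'] using this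
  · have := congrArg (fun q => Polynomial.coeff q 1) ht
    simpa [coeff_mul_X_pow'] using this

end main

set_option maxHeartbeats 4000000 in
theorem stmt_14 (p m s : ℕ) (hp : p.Prime) (hm : 0 < m) (hs : 0 < s)
    (F : Type) [Field F] [Fintype F] (hF : Fintype.card F = p ^ m)
    (f : F[X]) (hmon : f.Monic) (hirr : Irreducible f) (d : ℕ) (hd : f.natDegree = d)
    (k : ℕ) (hk1 : 1 ≤ k) (hk2 : k ≤ p ^ s - 1)
    (b : Kq F (f ^ p ^ s))
    (hb : b ∈ Ideal.span
      {(Ideal.Quotient.mk (Ideal.span {f ^ p ^ s}) f) ^ ((p ^ s - k + 1) / 2 - 1)}) :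
    Nat.card ↥(Ideal.span ({Ideal.Quotient.mk
        (Ideal.span {(X : Polynomial (Kq F (f ^ p ^ s))) ^ 2})
        (C ((Ideal.Quotient.mk (Ideal.span {f ^ p ^ s}) f) ^ (k + 1) * b) +
          X * C ((Ideal.Quotient.mk (Ideal.span {f ^ p ^ s}) f) ^ k))} :
        Set (Kqu F (f ^ p ^ s)))) =
      p ^ (m * d * (p ^ s - k)) := by
  have hd1 : 0 < d := hd ▸ hirr.natDegree_pos
  have hfne : f ≠ 0 := hmon.ne_zero
  have hP2 : 2 ≤ (p ^ s) := Nat.one_lt_pow hs.ne' hp.one_lt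
  have hkP : k < (p ^ s) := by omega
  have hfPne : f ^ (p ^ s) ≠ 0 := pow_ne_zero _ hfne
  have hdegfP : 0 < (f ^ (p ^ s)).natDegree := by
    rw [natDegree_pow, hd]
    exact Nat.mul_pos (by omega) hd1
  set Q : Ideal F[X] := Ideal.span {f ^ (p ^ s)} with hQ
  set fb : Kq F (f ^ (p ^ s)) := Ideal.Quotient.mk Q f with hfb
  set U : Ideal (Polynomial (Kq F (f ^ (p ^ s)))) :=
    Ideal.span {(X : Polynomial (Kq F (f ^ (p ^ s)))) ^ 2} with hU
  set mkU : Polynomial (Kq F (f ^ (p ^ s))) →+* Kqu F (f ^ (p ^ s)) := Ideal.Quotient.mk U with hmkU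
  set g0 : Kqu F (f ^ (p ^ s)) := mkU (C (fb ^ (k + 1) * b) + X * C (fb ^ k)) with hg0
  set L := ((p ^ s) - k + 1) / 2 - 1 with hL
  obtain ⟨c, hc⟩ := Ideal.mem_span_singleton'.mp hb
  have hfb0 : ∀ n, (p ^ s) ≤ n → fb ^ n = 0 := by
    intro n hn
    rw [hfb, ← map_pow, Ideal.Quotient.eq_zero_iff_mem, hQ, Ideal.mem_span_singleton]
    exact pow_dvd_pow f hn
  have hLsum : (p ^ s) ≤ k + 2 + 2 * L := by omega
  set φ : (Kq F (f ^ (p ^ s)) × Kq F (f ^ (p ^ s))) →+ Kqu F (f ^ (p ^ s)) :=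
    AddMonoidHom.mk' (fun z => mkU (C z.1 + X * C z.2) * g0)
      (by
        intro x y
        show mkU (C (x.1 + y.1) + X * C (x.2 + y.2)) * g0 =
          mkU (C x.1 + X * C x.2) * g0 + mkU (C y.1 + X * C y.2) * g0
        have harg : (C (x.1 + y.1) + X * C (x.2 + y.2) : (Kq F (f ^ (p ^ s)))[X]) =
            (C x.1 + X * C x.2) + (C y.1 + X * C y.2) := by
          simp only [map_add]
          ring
        rw [harg, map_add, add_mul]) with hφ
  have hφ_apply : ∀ a' b' : Kq F (f ^ (p ^ s)), φ (a', b') = mkU (C a' + X * C b') * g0 :=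
    fun _ _ => rfl
  have hcomp : ∀ α β : Kq F (f ^ (p ^ s)), φ (α, β) =
      mkU (C (α * (fb ^ (k + 1) * b)) + X * C (α * fb ^ k + β * (fb ^ (k + 1) * b))) := by
    intro α β
    rw [hφ_apply, hg0, ← map_mul]
    have hX2 : mkU (X ^ 2 * C (β * fb ^ k)) = 0 := by
      rw [hmkU, Ideal.Quotient.eq_zero_iff_mem, hU]
      exact Ideal.mul_mem_right _ _ (Ideal.subset_span rfl)
    calc mkU ((C α + X * C β) * (C (fb ^ (k + 1) * b) + X * C (fb ^ k)))
        = mkU (C (α * (fb ^ (k + 1) * b)) + X * C (α * fb ^ k + β * (fb ^ (k + 1) * b))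
            + X ^ 2 * C (β * fb ^ k)) := by
          congr 1
          simp only [map_mul, map_add]
          ring
      _ = mkU (C (α * (fb ^ (k + 1) * b)) + X * C (α * fb ^ k + β * (fb ^ (k + 1) * b))) := by
          rw [map_add, hX2, add_zero]
  have hker : ∀ α β : Kq F (f ^ (p ^ s)), φ (α, β) = 0 ↔ (α + β * (fb * b)) * fb ^ k = 0 := by
    intro α β
    rw [hcomp]
    constructor
    · intro hz
      obtain ⟨hA, hB⟩ := inj_Kqu F (f ^ (p ^ s)) _ _ hz
      calc (α + β * (fb * b)) * fb ^ k = α * fb ^ k + β * (fb ^ (k + 1) * b) := by ring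
        _ = 0 := hB
    · intro hz
      have hB : α * fb ^ k + β * (fb ^ (k + 1) * b) = 0 := by
        calc α * fb ^ k + β * (fb ^ (k + 1) * b) = (α + β * (fb * b)) * fb ^ k := by ring
          _ = 0 := hz
      have hzero : (fb * b) * fb ^ k * (fb * b) = 0 := by
        rw [← hc]
        calc fb * (c * fb ^ L) * fb ^ k * (fb * (c * fb ^ L))
            = c ^ 2 * fb ^ (k + 2 + 2 * L) := by ring
          _ = 0 := by rw [hfb0 _ hLsum, mul_zero]
      have hA : α * (fb ^ (k + 1) * b) = 0 := by
        calc α * (fb ^ (k + 1) * b)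
            = (α + β * (fb * b)) * fb ^ k * (fb * b)
              - β * ((fb * b) * fb ^ k * (fb * b)) := by ring
          _ = 0 := by rw [hz, hzero, zero_mul, mul_zero, sub_zero]
      rw [hA, hB]
      simp
  -- card of span = card of range
  have hcard1 : Nat.card ↥(Ideal.span ({g0} : Set (Kqu F (f ^ (p ^ s))))) = Nat.card ↥φ.range := by
    apply Nat.card_congr
    apply Equiv.setCongr
    ext z
    simp only [SetLike.mem_coe, AddMonoidHom.mem_range, Ideal.mem_span_singleton']
    constructor
    · rintro ⟨r, rfl⟩
      obtain ⟨a', b', rfl⟩ := rep_Kqu F (f ^ (p ^ s)) hdegfP r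
      exact ⟨(a', b'), rfl⟩
    · rintro ⟨⟨a', b'⟩, rfl⟩
      exact ⟨mkU (C a' + X * C b'), rfl⟩
  have hcount : Nat.card (Kq F (f ^ (p ^ s)) × Kq F (f ^ (p ^ s))) =
      Nat.card ↥φ.range * Nat.card ↥φ.ker := by
    rw [AddSubgroup.card_eq_card_quotient_mul_card_addSubgroup φ.ker]
    congr 1
    exact Nat.card_congr (QuotientAddGroup.quotientKerEquivRange φ).toEquiv
  set Ann : Set (Kq F (f ^ (p ^ s))) := {x | x * fb ^ k = 0} with hAnn
  have hkerequiv : Nat.card ↥φ.ker = Nat.card (Kq F (f ^ (p ^ s))) * Nat.card ↥Ann := by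
    rw [← Nat.card_prod]
    apply Nat.card_congr
    refine ⟨fun z => (z.1.2, ⟨z.1.1 + z.1.2 * (fb * b),
        (hker _ _).mp (AddMonoidHom.mem_ker.mp z.2)⟩),
      fun w => ⟨(w.2.1 - w.1 * (fb * b), w.1), AddMonoidHom.mem_ker.mpr ((hker _ _).mpr (by
        have h6 := w.2.2
        calc (w.2.1 - w.1 * (fb * b) + w.1 * (fb * b)) * fb ^ k = w.2.1 * fb ^ k := by ring
          _ = 0 := h6))⟩, ?_, ?_⟩
    · intro z
      apply Subtype.ext
      apply Prod.ext <;> simp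
    · intro w
      apply Prod.ext
      · rfl
      · apply Subtype.ext
        simp
  have hKcard : Nat.card (Kq F (f ^ (p ^ s))) = Fintype.card F ^ (d * (p ^ s)) := by
    rw [card_Kq F (f ^ (p ^ s)) hfPne, natDegree_pow, hd, Nat.mul_comm]
  have hAnnCard : Nat.card ↥Ann = Fintype.card F ^ (d * k) := by
    have h7 := ann_eq F f hfne (p ^ s) k (le_of_lt hkP)
    calc Nat.card ↥Ann
        = Nat.card ↥(Ideal.span {fb ^ (p ^ s - k)} : Ideal (Kq F (f ^ p ^ s))) :=
          Nat.card_congr (Equiv.setCongr h7)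
      _ = Fintype.card F ^ (d * k) := by
          have h8 := card_span_pow F f hfne (p ^ s) ((p ^ s) - k) (Nat.sub_le (p ^ s) k)
          rw [Nat.sub_sub_self (le_of_lt hkP), hd] at h8
          exact h8
  have hq2 : 0 < Fintype.card F := Fintype.card_pos
  have hval : Nat.card ↥φ.range * (Fintype.card F ^ (d * (p ^ s)) * Fintype.card F ^ (d * k)) =
      Fintype.card F ^ (d * (p ^ s)) * Fintype.card F ^ (d * (p ^ s)) := by
    calc Nat.card ↥φ.range * (Fintype.card F ^ (d * (p ^ s)) * Fintype.card F ^ (d * k))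
        = Nat.card ↥φ.range * Nat.card ↥φ.ker := by rw [hkerequiv, hKcard, hAnnCard]
      _ = Nat.card (Kq F (f ^ (p ^ s)) × Kq F (f ^ (p ^ s))) := hcount.symm
      _ = Fintype.card F ^ (d * (p ^ s)) * Fintype.card F ^ (d * (p ^ s)) := by
          rw [Nat.card_prod, hKcard]
  have hrangeval : Nat.card ↥φ.range = Fintype.card F ^ (d * ((p ^ s) - k)) := by
    have hpos : 0 < Fintype.card F ^ (d * (p ^ s)) * Fintype.card F ^ (d * k) := by positivity
    apply Nat.eq_of_mul_eq_mul_right hpos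
    rw [hval, ← pow_add, ← pow_add, ← pow_add]
    congr 1
    have h9 : d * ((p ^ s) - k) + d * k = d * (p ^ s) := by
      rw [← Nat.mul_add, Nat.sub_add_cancel (le_of_lt hkP)]
    omega
  rw [hcard1, hrangeval, hF, ← pow_mul, ← Nat.mul_assoc]
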